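/- Let B be a field of characteristic 0 and g ≥ 1, r ≥ 0 integers. Let G be a g×g matrix whose entries G_{ij} ∈ R^B_{g,r} are homogeneous polynomials of degree 1, and suppose that for every X ∈ Mat_g(B), applying entrywise to G the substitution endomorphism T^(l) ↦ X·T^(l)·Xᵗ yields the matrix X·G·Xᵗ. Then there exist b_0,…,b_r ∈ B such that G_{ij} = b_0·T^(0)_{ij} + ⋯ + b_r·T^(r)_{ij} for all i, j; that is, the matrices T^(0),…,T^(r) form a B-basis of the space of such equivariant matrices of linear forms. -/

import Mathlib

open Matrix

noncomputable section

/-- The index set of the entries `(i, j)`, `i ≤ j`, of a symmetric `g × g` matrix. -/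
abbrev SymIdx (g : ℕ) : Type := {p : Fin g × Fin g // p.1 ≤ p.2}

/-- A scalar matrix viewed as a matrix of constant polynomials. -/
def mapC (K : Type*) [CommRing K] (σ : Type*) {g : ℕ} (Λ : Matrix (Fin g) (Fin g) K) :
    Matrix (Fin g) (Fin g) (MvPolynomial σ K) :=
  Λ.map fun a => MvPolynomial.C a

/-- The `l`-th generic symmetric matrix `T^(l)` (`0 ≤ l ≤ m-1`). -/
def genSym (K : Type*) [CommRing K] (g m : ℕ) (l : Fin m) :
    Matrix (Fin g) (Fin g) (MvPolynomial (Fin m × SymIdx g) K) :=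
  Matrix.of fun i j =>
    if h : i ≤ j then MvPolynomial.X (l, ⟨(i, j), h⟩)
    else MvPolynomial.X (l, ⟨(j, i), le_of_not_ge h⟩)

/-- The `K`-algebra endomorphism sending each variable `T^(l)_{ij}` to the `(i,j)` entry of
`X · T^(l) · Xᵗ` (for an arbitrary matrix `X`). -/
def symAct (K : Type*) [CommRing K] (g m : ℕ) (Λ : Matrix (Fin g) (Fin g) K) :
    MvPolynomial (Fin m × SymIdx g) K →ₐ[K] MvPolynomial (Fin m × SymIdx g) K :=
  MvPolynomial.aeval fun v : Fin m × SymIdx g =>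
    (mapC K (Fin m × SymIdx g) Λ * genSym K g m v.1 *
      (mapC K (Fin m × SymIdx g) Λ)ᵀ) v.2.1.1 v.2.1.2

namespace Stmt15Aux

open MvPolynomial

lemma degree_one_single {σ : Type*} (d : σ →₀ ℕ) (h : d.degree = 1) :
    ∃ v, d = Finsupp.single v 1 := by
  classical
  have hne : d ≠ 0 := by
    intro h0; rw [h0, map_zero] at h; simp at h
  obtain ⟨v, hv⟩ := Finsupp.ne_iff.mp hne
  simp only [Finsupp.coe_zero, Pi.zero_apply] at hv
  have hvs : v ∈ d.support := Finsupp.mem_support_iff.mpr hv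
  refine ⟨v, ?_⟩
  have hsub : d.support ⊆ {v} := by
    intro w hw
    by_contra hwv
    simp only [Finset.mem_singleton] at hwv
    have h2 : 2 ≤ d.degree := by
      calc 2 = 1 + 1 := rfl
        _ ≤ d w + d v := add_le_add
          (Nat.one_le_iff_ne_zero.mpr (Finsupp.mem_support_iff.mp hw))
          (Nat.one_le_iff_ne_zero.mpr hv)
        _ ≤ ∑ i ∈ d.support, d i := by
            rw [← Finset.sum_pair hwv]
            exact Finset.sum_le_sum_of_subset (by
              intro x hx; simp only [Finset.mem_insert, Finset.mem_singleton] at hx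
              rcases hx with rfl | rfl <;> [exact hw; exact hvs])
        _ = d.degree := rfl
    omega
  have hdv : d v = 1 := by
    have : d.degree = d v := by
      show ∑ i ∈ d.support, d i = d v
      rw [Finset.eq_singleton_iff_unique_mem.mpr
        ⟨hvs, fun x hx => Finset.mem_singleton.mp (hsub hx)⟩]
      simp
    omega
  exact Finsupp.ext fun w => by
    by_cases hw : w = v
    · subst hw; simp [hdv]
    · rw [Finsupp.single_eq_of_ne' (Ne.symm hw)]
      by_contra hne'
      exact hw (Finset.mem_singleton.mp (hsub (Finsupp.mem_support_iff.mpr hne')))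

lemma hom1_repr {σ K : Type*} [Fintype σ] [DecidableEq σ] [CommSemiring K]
    (p : MvPolynomial σ K) (hp : p.IsHomogeneous 1) :
    p = ∑ v, MvPolynomial.C (p.coeff (Finsupp.single v 1)) * MvPolynomial.X v := by
  ext d
  rw [coeff_sum]
  simp only [coeff_C_mul, coeff_X']
  by_cases hd : ∃ v, d = Finsupp.single v 1
  · obtain ⟨v, rfl⟩ := hd
    rw [Finset.sum_eq_single v]
    · simp
    · intro w _ hwv
      rw [if_neg (fun h => hwv ((Finsupp.single_left_inj one_ne_zero).mp h)), mul_zero]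
    · simp
  · rw [MvPolynomial.IsHomogeneous.coeff_eq_zero hp
      (fun hdd => hd (degree_one_single d hdd))]
    apply (Finset.sum_eq_zero _).symm
    intro w _
    rw [if_neg (fun h => hd ⟨w, h.symm⟩), mul_zero]

def sortPair {g : ℕ} (i j : Fin g) : SymIdx g :=
  if h : i ≤ j then ⟨(i, j), h⟩ else ⟨(j, i), le_of_not_ge h⟩

lemma sortPair_of_le {g : ℕ} {i j : Fin g} (h : i ≤ j) : sortPair i j = ⟨(i, j), h⟩ :=
  dif_pos h

lemma genSym_eq (K : Type*) [CommRing K] (g m : ℕ) (l : Fin m) (i j : Fin g) :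
    genSym K g m l i j = MvPolynomial.X (l, sortPair i j) := by
  unfold genSym sortPair
  by_cases h : i ≤ j <;> simp [h]

lemma sortPair_fst_snd {g : ℕ} (w : SymIdx g) : sortPair w.1.1 w.1.2 = w := by
  unfold sortPair; rw [dif_pos w.2]

lemma sortPair_diag_iff {g : ℕ} (a b v : Fin g) :
    sortPair a b = sortPair v v ↔ a = v ∧ b = v := by
  rw [sortPair_of_le (le_refl v)]
  unfold sortPair
  by_cases h : a ≤ b
  · simp [h, Subtype.ext_iff, Prod.ext_iff]
  · simp only [h, dite_false, Subtype.mk.injEq, Prod.mk.injEq]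
    exact and_comm

lemma coeff_conj {g : ℕ} {σ K : Type*} [CommRing K]
    (Λ : Matrix (Fin g) (Fin g) K) (M : Matrix (Fin g) (Fin g) (MvPolynomial σ K))
    (s t : Fin g) (μ : σ →₀ ℕ) :
    MvPolynomial.coeff μ ((mapC K σ Λ * M * (mapC K σ Λ)ᵀ) s t) =
      ∑ a, ∑ b, Λ s a * Λ t b * MvPolynomial.coeff μ (M a b) := by
  simp only [Matrix.mul_apply, Matrix.transpose_apply, mapC, Matrix.map_apply,
    coeff_sum, Finset.sum_mul]
  rw [Finset.sum_comm]
  refine Finset.sum_congr rfl fun a _ => Finset.sum_congr rfl fun b _ => ?_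
  rw [mul_comm (MvPolynomial.C (Λ s a) * M a b) (MvPolynomial.C (Λ t b)), ← mul_assoc,
    ← MvPolynomial.C_mul, coeff_C_mul]
  ring

/-- The shear matrix `1 + E_{uv}`. -/
def shearMat {K : Type*} [CommRing K] {g : ℕ} (u v : Fin g) : Matrix (Fin g) (Fin g) K :=
  Matrix.of fun x y => if x = y ∨ (x = u ∧ y = v) then 1 else 0

end Stmt15Aux

/-- Let `B` be a field of characteristic `0`, `g ≥ 1`, `r ≥ 0`.  Let `G` be a
`g × g` matrix whose entries are homogeneous polynomials of degree `1` in `R^B_{g,r}`, and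
suppose that for every `X ∈ Mat_g(B)`, applying the substitution `T^(l) ↦ X·T^(l)·Xᵗ`
entrywise to `G` yields `X · G · Xᵗ`.  Then there are `b_0, …, b_r ∈ B` with
`G_{ij} = b_0·T^(0)_{ij} + ⋯ + b_r·T^(r)_{ij}` for all `i, j`. -/
theorem stmt15 (B : Type*) [Field B] [CharZero B] (g r : ℕ) (hg : 1 ≤ g)
    (G : Matrix (Fin g) (Fin g) (MvPolynomial (Fin (r + 1) × SymIdx g) B))
    (hhom : ∀ i j, (G i j).IsHomogeneous 1)
    (hequiv : ∀ X : Matrix (Fin g) (Fin g) B,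
      G.map (fun p => symAct B g (r + 1) X p) =
        mapC B (Fin (r + 1) × SymIdx g) X * G * (mapC B (Fin (r + 1) × SymIdx g) X)ᵀ) :
    ∃ b : Fin (r + 1) → B, ∀ i j,
      G i j = ∑ l, MvPolynomial.C (b l) * genSym B g (r + 1) l i j := by
  classical
  open Stmt15Aux MvPolynomial Finsupp in
  have hrepr : ∀ i j, G i j = ∑ v, MvPolynomial.C ((G i j).coeff (Finsupp.single v 1)) *
      MvPolynomial.X v := fun i j => hom1_repr _ (hhom i j)
  have master : ∀ (Λ : Matrix (Fin g) (Fin g) B) (i j : Fin g)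
      (v₀ : Fin (r + 1) × SymIdx g),
      (∑ v : Fin (r + 1) × SymIdx g, (G i j).coeff (Finsupp.single v 1) *
        ∑ a, ∑ b, Λ v.2.1.1 a * Λ v.2.1.2 b *
          (if ((v.1, sortPair a b) : Fin (r + 1) × SymIdx g) = v₀ then 1 else 0)) =
      ∑ a, ∑ b, Λ i a * Λ j b * (G a b).coeff (Finsupp.single v₀ 1) := by
    intro Λ i j v₀
    have h1 : symAct B g (r + 1) Λ (G i j) =
        (mapC B (Fin (r + 1) × SymIdx g) Λ * G *
          (mapC B (Fin (r + 1) × SymIdx g) Λ)ᵀ) i j :=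
      Matrix.ext_iff.mpr (hequiv Λ) i j
    have h2 := congrArg (MvPolynomial.coeff (Finsupp.single v₀ 1)) h1
    rw [coeff_conj] at h2
    rw [hrepr i j, map_sum] at h2
    simp only [_root_.map_mul, symAct, MvPolynomial.aeval_C, MvPolynomial.aeval_X,
      MvPolynomial.algebraMap_eq, MvPolynomial.coeff_sum, MvPolynomial.coeff_C_mul,
      coeff_conj, genSym_eq, MvPolynomial.coeff_X',
      Finsupp.single_left_inj (one_ne_zero : (1 : ℕ) ≠ 0)] at h2
    exact h2
  have hdiag : ∀ (d : Fin g → B) (i j : Fin g) (v : Fin (r + 1) × SymIdx g),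
      d v.2.1.1 * d v.2.1.2 * (G i j).coeff (Finsupp.single v 1) =
        d i * d j * (G i j).coeff (Finsupp.single v 1) := by
    intro d i j v
    have h := master (Matrix.diagonal d) i j v
    have hL : ∀ x : Fin (r + 1) × SymIdx g,
        (∑ a, ∑ b, Matrix.diagonal d x.2.1.1 a * Matrix.diagonal d x.2.1.2 b *
          (if ((x.1, sortPair a b) : Fin (r + 1) × SymIdx g) = v then 1 else 0)) =
        d x.2.1.1 * d x.2.1.2 * (if x = v then 1 else 0) := by
      intro x
      rw [Finset.sum_eq_single x.2.1.1]
      · rw [Finset.sum_eq_single x.2.1.2]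
        · simp [Matrix.diagonal_apply_eq, sortPair_fst_snd, Prod.mk.eta, mul_assoc]
        · intro b _ hb
          rw [Matrix.diagonal_apply_ne' d (fun hh => hb hh), mul_zero, zero_mul]
        · simp
      · intro a _ ha
        rw [Finset.sum_eq_zero]
        intro b _
        rw [Matrix.diagonal_apply_ne' d (fun hh => ha hh), zero_mul, zero_mul]
      · simp
    have e1 : (∑ x : Fin (r + 1) × SymIdx g, (G i j).coeff (Finsupp.single x 1) *
        (d x.2.1.1 * d x.2.1.2 * (if x = v then 1 else 0))) =
        (G i j).coeff (Finsupp.single v 1) * (d v.2.1.1 * d v.2.1.2) := by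
      rw [Finset.sum_eq_single v]
      · simp
      · intro x _ hx; simp [hx]
      · simp
    have e2 : (∑ a, ∑ b, Matrix.diagonal d i a * Matrix.diagonal d j b *
        (G a b).coeff (Finsupp.single v 1)) =
        d i * d j * (G i j).coeff (Finsupp.single v 1) := by
      rw [Finset.sum_eq_single i]
      · rw [Finset.sum_eq_single j]
        · simp
        · intro b _ hb
          rw [Matrix.diagonal_apply_ne' d (fun hh => hb hh), mul_zero, zero_mul]
        · simp
      · intro a _ ha
        rw [Finset.sum_eq_zero]
        intro b _
        rw [Matrix.diagonal_apply_ne' d (fun hh => ha hh), zero_mul, zero_mul]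
      · simp
    simp only [hL] at h
    rw [e1, e2] at h
    linear_combination h
  have hzero : ∀ (i j : Fin g) (l : Fin (r + 1)) (w : SymIdx g), w ≠ sortPair i j →
      (G i j).coeff (Finsupp.single ((l, w) : Fin (r + 1) × SymIdx g) 1) = 0 := by
    intro i j l w hw
    by_contra h0
    have key : ∀ x : Fin g, (w.1.1 = x ∨ w.1.2 = x) ↔ (i = x ∨ j = x) := by
      intro x
      have h := hdiag (fun k => if k = x then (0 : B) else 1) i j (l, w)
      simp only at h
      have hc := mul_right_cancel₀ h0 h
      constructor
      · intro hst
        by_contra hij2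
        push_neg at hij2
        rw [if_neg hij2.1, if_neg hij2.2, one_mul] at hc
        rcases hst with h5 | h5 <;> rw [if_pos h5] at hc <;> simp at hc
      · intro hij2
        by_contra hst
        push_neg at hst
        rw [if_neg hst.1, if_neg hst.2, one_mul] at hc
        rcases hij2 with h5 | h5 <;> rw [if_pos h5] at hc <;> simp at hc
    have hA : w.1.1 = i ∨ w.1.2 = i := (key i).mpr (Or.inl rfl)
    have hB : w.1.1 = j ∨ w.1.2 = j := (key j).mpr (Or.inr rfl)
    have hD : (w.1.1 = i ∧ w.1.2 = j) ∨ (w.1.1 = j ∧ w.1.2 = i) := by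
      rcases hA with h5 | h5 <;> rcases hB with h6 | h6
      · have hij : i = j := h5.symm.trans h6
        rcases (key w.1.2).mp (Or.inr rfl) with h7 | h7
        · exact Or.inl ⟨h5, hij ▸ h7.symm⟩
        · exact Or.inl ⟨h5, h7.symm⟩
      · exact Or.inl ⟨h5, h6⟩
      · exact Or.inr ⟨h6, h5⟩
      · have hij : i = j := h5.symm.trans h6
        rcases (key w.1.1).mp (Or.inl rfl) with h7 | h7
        · exact Or.inl ⟨h7.symm, h6⟩
        · exact Or.inl ⟨hij ▸ h7.symm, h6⟩
    apply hw
    have hle := w.2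
    rcases hD with ⟨h5, h6⟩ | ⟨h5, h6⟩
    · rw [sortPair_of_le (h5 ▸ h6 ▸ hle)]
      exact Subtype.ext (Prod.ext h5 h6)
    · by_cases hij : i ≤ j
      · have hji : j ≤ i := h5 ▸ h6 ▸ hle
        have : i = j := le_antisymm hij hji
        rw [sortPair_of_le hij]
        exact Subtype.ext (Prod.ext (h5.trans this.symm) (h6.trans this))
      · unfold Stmt15Aux.sortPair
        rw [dif_neg hij]
        exact Subtype.ext (Prod.ext h5 h6)
  have master2 : ∀ (Λ : Matrix (Fin g) (Fin g) B) (i j : Fin g)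
      (v₀ : Fin (r + 1) × SymIdx g),
      (∑ l : Fin (r + 1), (G i j).coeff
          (Finsupp.single ((l, sortPair i j) : Fin (r + 1) × SymIdx g) 1) *
        ∑ a, ∑ b, Λ (sortPair i j).1.1 a * Λ (sortPair i j).1.2 b *
          (if ((l, sortPair a b) : Fin (r + 1) × SymIdx g) = v₀ then 1 else 0)) =
      ∑ a, ∑ b, Λ i a * Λ j b * (G a b).coeff (Finsupp.single v₀ 1) := by
    intro Λ i j v₀
    rw [← master Λ i j v₀, Fintype.sum_prod_type]
    refine Finset.sum_congr rfl fun l _ => ?_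
    rw [Finset.sum_eq_single (sortPair i j)]
    · intro w _ hwne
      rw [hzero i j l w hwne, zero_mul]
    · simp
  have repr2 : ∀ i j, G i j = ∑ l, MvPolynomial.C ((G i j).coeff
      (Finsupp.single ((l, sortPair i j) : Fin (r + 1) × SymIdx g) 1)) *
      MvPolynomial.X (l, sortPair i j) := by
    intro i j
    conv_lhs => rw [hrepr i j, Fintype.sum_prod_type]
    refine Finset.sum_congr rfl fun l _ => ?_
    apply Finset.sum_eq_single (sortPair i j)
    · intro w _ hwne
      rw [hzero i j l w hwne, map_zero, zero_mul]
    · simp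
  have hshear : ∀ (u v : Fin g), u < v → ∀ (i j : Fin g) (l₀ : Fin (r + 1)),
      (G i j).coeff (Finsupp.single ((l₀, sortPair i j) : Fin (r + 1) × SymIdx g) 1) *
        (shearMat u v (sortPair i j).1.1 v * shearMat u v (sortPair i j).1.2 v) =
      shearMat u v i v * shearMat u v j v *
        (G v v).coeff (Finsupp.single ((l₀, sortPair v v) : Fin (r + 1) × SymIdx g) 1) := by
    intro u v huv i j l₀
    have h := master2 (shearMat u v) i j (l₀, sortPair v v)
    have inner0 : ∀ (l : Fin (r + 1)) (a b : Fin g), ¬(a = v ∧ b = v) →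
        (if ((l, sortPair a b) : Fin (r + 1) × SymIdx g) = (l₀, sortPair v v)
          then (1 : B) else 0) = 0 := by
      intro l a b hab
      rw [if_neg]
      intro hcon
      rw [Prod.mk.injEq] at hcon
      exact hab ((sortPair_diag_iff a b v).mp hcon.2)
    have hS : ∀ (l : Fin (r + 1)),
        (∑ a, ∑ b, (shearMat u v (sortPair i j).1.1 a : B) * shearMat u v (sortPair i j).1.2 b *
          (if ((l, sortPair a b) : Fin (r + 1) × SymIdx g) = (l₀, sortPair v v)
            then 1 else 0)) =
        (shearMat u v (sortPair i j).1.1 v : B) * shearMat u v (sortPair i j).1.2 v *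
          (if l = l₀ then 1 else 0) := by
      intro l
      rw [Finset.sum_eq_single v]
      · rw [Finset.sum_eq_single v]
        · by_cases hl : l = l₀ <;> simp [hl, Prod.mk.injEq]
        · intro b _ hb
          rw [inner0 l v b (fun hh => hb hh.2), mul_zero]
        · simp
      · intro a _ ha
        rw [Finset.sum_eq_zero]
        intro b _
        rw [inner0 l a b (fun hh => ha hh.1), mul_zero]
      · simp
    simp only [hS] at h
    have hL : (∑ l : Fin (r + 1),
        (G i j).coeff (Finsupp.single ((l, sortPair i j) : Fin (r + 1) × SymIdx g) 1) *
          ((shearMat u v (sortPair i j).1.1 v : B) * shearMat u v (sortPair i j).1.2 v *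
            (if l = l₀ then 1 else 0))) =
        (G i j).coeff (Finsupp.single ((l₀, sortPair i j) : Fin (r + 1) × SymIdx g) 1) *
          ((shearMat u v (sortPair i j).1.1 v : B) * shearMat u v (sortPair i j).1.2 v) := by
      rw [Finset.sum_eq_single l₀]
      · rw [if_pos rfl, mul_one]
      · intro l _ hl
        rw [if_neg hl, mul_zero, mul_zero]
      · simp
    rw [hL] at h
    have hcf : ∀ a b : Fin g,
        (G a b).coeff (Finsupp.single ((l₀, sortPair v v) : Fin (r + 1) × SymIdx g) 1) =
        if a = v ∧ b = v then
          (G v v).coeff (Finsupp.single ((l₀, sortPair v v) : Fin (r + 1) × SymIdx g) 1)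
        else 0 := by
      intro a b
      by_cases hab : a = v ∧ b = v
      · obtain ⟨rfl, rfl⟩ := hab
        rw [if_pos ⟨rfl, rfl⟩]
      · rw [if_neg hab]
        exact hzero a b l₀ _ (fun hcon => hab ((sortPair_diag_iff a b v).mp hcon.symm))
    have h' : (∑ a, ∑ b, (shearMat u v i a : B) * shearMat u v j b *
        (G a b).coeff (Finsupp.single ((l₀, sortPair v v) : Fin (r + 1) × SymIdx g) 1)) =
        ∑ a, ∑ b, (shearMat u v i a : B) * shearMat u v j b *
        (if a = v ∧ b = v then
          (G v v).coeff (Finsupp.single ((l₀, sortPair v v) : Fin (r + 1) × SymIdx g) 1)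
        else 0) :=
      Finset.sum_congr rfl fun a _ => Finset.sum_congr rfl fun b _ => by rw [hcf a b]
    rw [h'] at h
    have hR : (∑ a, ∑ b, (shearMat u v i a : B) * shearMat u v j b *
        (if a = v ∧ b = v then
          (G v v).coeff (Finsupp.single ((l₀, sortPair v v) : Fin (r + 1) × SymIdx g) 1)
        else 0)) =
        (shearMat u v i v : B) * shearMat u v j v *
          (G v v).coeff (Finsupp.single ((l₀, sortPair v v) : Fin (r + 1) × SymIdx g) 1) := by
      rw [Finset.sum_eq_single v]
      · rw [Finset.sum_eq_single v]
        · rw [if_pos ⟨rfl, rfl⟩]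
        · intro b _ hb
          rw [if_neg (fun hh => hb hh.2), mul_zero]
        · simp
      · intro a _ ha
        rw [Finset.sum_eq_zero]
        intro b _
        rw [if_neg (fun hh => ha hh.1), mul_zero]
      · simp
    rw [hR] at h
    exact h
  have hb : ∀ (u v : Fin g), u < v → ∀ l₀ : Fin (r + 1),
      ((G u u).coeff (Finsupp.single ((l₀, sortPair u u) : Fin (r + 1) × SymIdx g) 1) =
        (G v v).coeff (Finsupp.single ((l₀, sortPair v v) : Fin (r + 1) × SymIdx g) 1)) ∧
      ((G u v).coeff (Finsupp.single ((l₀, sortPair u v) : Fin (r + 1) × SymIdx g) 1) =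
        (G v v).coeff (Finsupp.single ((l₀, sortPair v v) : Fin (r + 1) × SymIdx g) 1)) ∧
      ((G v u).coeff (Finsupp.single ((l₀, sortPair v u) : Fin (r + 1) × SymIdx g) 1) =
        (G v v).coeff (Finsupp.single ((l₀, sortPair v v) : Fin (r + 1) × SymIdx g) 1)) := by
    intro u v huv l₀
    have h1 := hshear u v huv u u l₀
    have h2 := hshear u v huv u v l₀
    have h3 := hshear u v huv v u l₀
    have e1 : sortPair u u = ⟨(u, u), le_refl u⟩ := sortPair_of_le le_rfl
    have e2 : sortPair u v = ⟨(u, v), le_of_lt huv⟩ := sortPair_of_le huv.le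
    have e3 : sortPair v u = ⟨(u, v), le_of_lt huv⟩ := by
      unfold Stmt15Aux.sortPair
      rw [dif_neg (not_le.mpr huv)]
    rw [e1] at h1
    rw [e2] at h2
    rw [e3] at h3
    simp only [shearMat, Matrix.of_apply, huv.ne, and_self, or_true, if_true, or_false,
      and_true, if_false, mul_one, one_mul, false_or, false_and, and_false] at h1 h2 h3
    refine ⟨?_, ?_, ?_⟩
    · rw [e1]; simpa using h1
    · rw [e2]; simpa using h2
    · rw [e3]; simpa using h3
  have hzle : ∀ k : Fin g, (⟨0, hg⟩ : Fin g) ≤ k := fun k => by simp [Fin.le_def]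
  have hbb : ∀ (i j : Fin g) (l : Fin (r + 1)),
      (G i j).coeff (Finsupp.single ((l, sortPair i j) : Fin (r + 1) × SymIdx g) 1) =
      (G ⟨0, hg⟩ ⟨0, hg⟩).coeff
        (Finsupp.single ((l, sortPair ⟨0, hg⟩ ⟨0, hg⟩) : Fin (r + 1) × SymIdx g) 1) := by
    intro i j l
    rcases lt_trichotomy i j with h | h | h
    · rw [(hb i j h l).2.1]
      rcases eq_or_lt_of_le (hzle j) with hz | hz
      · rw [← hz]
      · rw [← (hb _ j hz l).1]
    · subst h
      rcases eq_or_lt_of_le (hzle i) with hz | hz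
      · rw [← hz]
      · rw [← (hb _ i hz l).1]
    · rw [(hb j i h l).2.2]
      rcases eq_or_lt_of_le (hzle i) with hz | hz
      · rw [← hz]
      · rw [← (hb _ i hz l).1]
  refine ⟨fun l => (G ⟨0, hg⟩ ⟨0, hg⟩).coeff
      (Finsupp.single ((l, sortPair ⟨0, hg⟩ ⟨0, hg⟩) : Fin (r + 1) × SymIdx g) 1),
    fun i j => ?_⟩
  rw [repr2 i j]
  exact Finset.sum_congr rfl fun l _ => by rw [genSym_eq, hbb i j l]
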